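/- Let D = [[λ, 1], [0, λ]] be a 2×2 Jordan block. Then the numerical range of D is the closed disk in ℂ of radius 1/2 centered at λ. -/

import Mathlib

open scoped Matrix
open Complex Real

/-- The numerical range of a square complex matrix. -/
def numRange {N : ℕ} (M : Matrix (Fin N) (Fin N) ℂ) : Set ℂ :=
  {z | ∃ x : EuclideanSpace ℂ (Fin N), ‖x‖ = 1 ∧ star (x : Fin N → ℂ) ⬝ᵥ M.mulVec x = z}

/-- The numerical abscissa of a square complex matrix. -/
noncomputable def numAbs {N : ℕ} (M : Matrix (Fin N) (Fin N) ℂ) : ℝ :=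
  sSup {r : ℝ | ∃ x : EuclideanSpace ℂ (Fin N), ‖x‖ = 1 ∧ (star (x : Fin N → ℂ) ⬝ᵥ M.mulVec x).re = r}

/-- The spectral (operator 2-)norm of a square complex matrix. -/
noncomputable def spec2 {N : ℕ} (M : Matrix (Fin N) (Fin N) ℂ) : ℝ :=
  ‖Matrix.toEuclideanCLM (𝕜 := ℂ) M‖

/-- The squared Frobenius norm of a square complex matrix. -/
noncomputable def frobSq {N : ℕ} (M : Matrix (Fin N) (Fin N) ℂ) : ℝ :=
  ∑ i, ∑ j, ‖M i j‖ ^ 2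

lemma norm_sq_sum (x : EuclideanSpace ℂ (Fin 2)) (hx : ‖x‖ = 1) :
    ‖x 0‖^2 + ‖x 1‖^2 = 1 := by
  have h := EuclideanSpace.norm_eq x
  rw [hx, Fin.sum_univ_two] at h
  nlinarith [Real.sq_sqrt (by positivity : (0:ℝ) ≤ ‖x 0‖^2 + ‖x 1‖^2)]

lemma dot_eq (lam : ℂ) (x : EuclideanSpace ℂ (Fin 2)) (hx : ‖x‖ = 1) :
    star (x : Fin 2 → ℂ) ⬝ᵥ (!![lam, 1; 0, lam]).mulVec x
      = lam + (starRingEnd ℂ) (x 0) * x 1 := by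
  have hn := norm_sq_sum x hx
  have h0 : x 0 * (starRingEnd ℂ) (x 0) = (‖x 0‖:ℂ)^2 := Complex.mul_conj' _
  have h1 : x 1 * (starRingEnd ℂ) (x 1) = (‖x 1‖:ℂ)^2 := Complex.mul_conj' _
  have hc : (‖x 0‖:ℂ)^2 + (‖x 1‖:ℂ)^2 = 1 := by
    exact_mod_cast congrArg (Complex.ofReal) hn
  simp [dotProduct, Matrix.mulVec, Fin.sum_univ_two, Matrix.vecHead, Matrix.vecTail, Pi.star_apply, Complex.star_def]
  linear_combination lam * h0 + lam * h1 + lam * hc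

/-- The numerical range of the 2×2 Jordan block [[λ,1],[0,λ]] is the closed disk
of radius 1/2 centered at λ. -/
theorem stmt6 (lam : ℂ) :
    numRange !![lam, 1; 0, lam] = Metric.closedBall lam (1 / 2) := by
  ext z
  simp only [numRange, Set.mem_setOf_eq, Metric.mem_closedBall, Complex.dist_eq]
  constructor
  · rintro ⟨x, hx, rfl⟩
    rw [dot_eq lam x hx]
    have hn := norm_sq_sum x hx
    have habs : ‖(starRingEnd ℂ) (x 0) * x 1‖ = ‖x 0‖ * ‖x 1‖ := by
      simp [norm_mul, Complex.norm_conj]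
    calc ‖lam + (starRingEnd ℂ) (x 0) * x 1 - lam‖
        = ‖x 0‖ * ‖x 1‖ := by rw [add_sub_cancel_left]; exact habs
      _ ≤ 1/2 := by nlinarith [sq_nonneg (‖x 0‖ - ‖x 1‖)]
  · intro hz
    set w := z - lam with hw
    set t := ‖w‖ with ht
    have ht0 : 0 ≤ t := norm_nonneg w
    have ht2 : t ≤ 1/2 := hz
    by_cases h : t = 0
    · set v : EuclideanSpace ℂ (Fin 2) := WithLp.toLp 2 ![1, 0] with hv
      have hx : ‖v‖ = 1 := by
        rw [EuclideanSpace.norm_eq, Fin.sum_univ_two]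
        have : v 0 = 1 := rfl
        have h1 : v 1 = 0 := rfl
        rw [this, h1]
        simp
      refine ⟨v, hx, ?_⟩
      rw [dot_eq lam v hx]
      have hw0 : w = 0 := by rwa [norm_eq_zero] at h
      have hzl : z = lam := by
        have := hw ▸ hw0
        linear_combination this
      have hv1 : v 1 = 0 := rfl
      rw [hv1, hzl]
      ring
    · have htpos : 0 < t := lt_of_le_of_ne ht0 (Ne.symm h)
      set s := Real.sqrt (1 - 4*t^2) with hs
      have hs0 : 0 ≤ s := Real.sqrt_nonneg _
      have hs2 : s^2 = 1 - 4*t^2 := Real.sq_sqrt (by nlinarith)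
      have hs1 : s ≤ 1 := by nlinarith
      set a := Real.sqrt ((1+s)/2) with ha
      set b := Real.sqrt ((1-s)/2) with hb
      have ha0 : 0 ≤ a := Real.sqrt_nonneg _
      have hb0 : 0 ≤ b := Real.sqrt_nonneg _
      have ha2 : a^2 = (1+s)/2 := Real.sq_sqrt (by linarith)
      have hb2 : b^2 = (1-s)/2 := Real.sq_sqrt (by linarith)
      have hab : a * b = t := by
        rw [ha, hb, ← Real.sqrt_mul (by linarith)]
        rw [show (1+s)/2 * ((1-s)/2) = (1 - s^2)/4 by ring, hs2]
        rw [show (1 - (1 - 4*t^2))/4 = t^2 by ring]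
        exact Real.sqrt_sq ht0
      set v : EuclideanSpace ℂ (Fin 2) := WithLp.toLp 2 ![(a:ℂ), ((b/t : ℝ) : ℂ) * w] with hv
      have hv0 : v 0 = (a:ℂ) := rfl
      have hv1 : v 1 = ((b/t : ℝ) : ℂ) * w := rfl
      have e0 : ‖v 0‖ = a := by
        rw [hv0, Complex.norm_real, Real.norm_eq_abs, _root_.abs_of_nonneg ha0]
      have e1 : ‖v 1‖ = b := by
        rw [hv1, norm_mul, Complex.norm_real, Real.norm_eq_abs,
          _root_.abs_of_nonneg (by positivity : (0:ℝ) ≤ b/t), ← ht,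
          div_mul_cancel₀ _ (ne_of_gt htpos)]
      have hx : ‖v‖ = 1 := by
        rw [EuclideanSpace.norm_eq, Fin.sum_univ_two, e0, e1, ha2, hb2,
          show (1+s)/2 + (1-s)/2 = 1 by ring, Real.sqrt_one]
      refine ⟨v, hx, ?_⟩
      rw [dot_eq lam v hx, hv0, hv1, Complex.conj_ofReal]
      have habt : (a : ℂ) * (((b/t : ℝ) : ℂ) * w) = w := by
        rw [← mul_assoc, ← Complex.ofReal_mul]
        rw [show a * (b/t) = (a*b)/t by ring, hab, div_self (ne_of_gt htpos)]
        simp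
      rw [habt, hw]
      ring
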